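/- arXiv:1809.09256 — 2 statements merged into one kernel-verified Lean document; each statement's English description precedes it below -/
import Mathlib

section
/- Let R be a reduced Noetherian ring with minimal primes q_1, …, q_n. Then the integral closure R^N of R in its total ring of fractions is isomorphic, as an R-algebra, to the product ∏_{i=1}^n (R/q_i)^N of the normalizations of the quotient domains R/q_i (each (R/q_i)^N being the integral closure of the domain R/q_i in its fraction field). -/
universe u v

set_option synthInstance.maxHeartbeats 1000000
set_option maxHeartbeats 1000000

/-- A ring homomorphism is *birational* if it carries nonzerodivisors to nonzerodivisors and
the induced map on total rings of fractions is bijective. -/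
def IsBirationalHom {A : Type u} {B : Type v} [CommRing A] [CommRing B] (f : A →+* B) : Prop :=
  ∃ hle : nonZeroDivisors A ≤ Submonoid.comap f (nonZeroDivisors B),
    Function.Bijective
      (IsLocalization.map (M := nonZeroDivisors A) (T := nonZeroDivisors B)
        (FractionRing B) f hle : FractionRing A →+* FractionRing B)

/-- A ring homomorphism induces isomorphisms of all residue fields if for every prime `q`
of the target, the induced map on residue fields `κ(q.comap f) → κ(q)` is bijective. -/
def InducesResidueFieldIsos {A : Type u} {B : Type v} [CommRing A] [CommRing B]
    (f : A →+* B) : Prop :=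
  ∀ (q : Ideal B) [q.IsPrime],
    Function.Bijective
      (IsLocalRing.ResidueField.map (Localization.localRingHom (q.comap f) q f rfl))

/-- A commutative ring `A` is seminormal if every finite birational (injective) extension
which induces a bijection on prime spectra and isomorphisms of all residue fields is an
isomorphism. -/
def IsSeminormalRing (A : Type u) [CommRing A] : Prop :=
  ∀ (B : Type u) [CommRing B] (f : A →+* B),
    Function.Injective f → f.Finite → IsBirationalHom f →
    Function.Bijective (PrimeSpectrum.comap f) →
    InducesResidueFieldIsos f →
    Function.Bijective f

/-- `S` is the seminormalization of `R` if it is the smallest seminormal intermediate ring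
between `R` and the normalization `R^N` (the integral closure of `R` in its total ring of
fractions). -/
def IsSeminormalization (R : Type u) [CommRing R]
    (S : Subalgebra R (FractionRing R)) : Prop :=
  S ≤ integralClosure R (FractionRing R) ∧ IsSeminormalRing S ∧
    ∀ T : Subalgebra R (FractionRing R),
      T ≤ integralClosure R (FractionRing R) → IsSeminormalRing T → S ≤ T

/-- The conductor `Ann_R (R^N / R)` of a commutative ring in its normalization. -/
noncomputable def conductorIdeal (R : Type u) [CommRing R] : Ideal R :=
  Module.annihilator R
    (↥(integralClosure R (FractionRing R)) ⧸
      LinearMap.range (Algebra.linearMap R ↥(integralClosure R (FractionRing R))))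

/-- The pullback (fiber product) of a diagram of ring maps `A → T ← B`, realized as the
subring of `A × B` of pairs with equal images in `T`. -/
def ringPullback {A : Type u} {B : Type v} {T : Type*} [CommRing A] [CommRing B] [CommRing T]
    (f : A →+* T) (g : B →+* T) : Subring (A × B) :=
  RingHom.eqLocus (f.comp (RingHom.fst A B)) (g.comp (RingHom.snd A B))
section Statement5Aux

open Polynomial

namespace Statement5Aux

variable (R : Type) [CommRing R]

instance instPrime (q : minimalPrimes R) : (q : Ideal R).IsPrime := q.2.1.1

/-- Quotient domain by a minimal prime. -/
abbrev Q (q : minimalPrimes R) : Type := R ⧸ (q : Ideal R)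

/-- Fraction field of the quotient domain. -/
abbrev K (q : minimalPrimes R) : Type := FractionRing (Q R q)

/-- The product of the fraction fields of the quotient domains. -/
abbrev P : Type := Π q : minimalPrimes R, K R q

/-- The natural map from `R` to the product of the `Frac(R/q)`. -/
noncomputable def phi : R →+* P R :=
  Pi.ringHom fun q => (algebraMap (Q R q) (K R q)).comp (Ideal.Quotient.mk _)

noncomputable instance : Algebra R (P R) := (phi R).toAlgebra

lemma algebraMap_P_apply (r : R) (q : minimalPrimes R) :
    algebraMap R (P R) r q = algebraMap (Q R q) (K R q) (Ideal.Quotient.mk _ r) := rfl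

variable {R}

lemma mem_nonZeroDivisors_of_forall [IsReduced R] {s : R}
    (hs : ∀ I ∈ minimalPrimes R, s ∉ I) : s ∈ nonZeroDivisors R := by
  rw [mem_nonZeroDivisors_iff_right]
  intro x hx
  refine IsNilpotent.eq_zero (nilpotent_iff_mem_prime.mpr fun p hp => ?_)
  haveI := hp
  obtain ⟨m, hm, hmle⟩ := Ideal.exists_minimalPrimes_le (J := p) bot_le
  haveI : m.IsPrime := hm.1.1
  have hxs : x * s ∈ m := by rw [hx]; exact m.zero_mem
  exact hmle ((‹m.IsPrime›.mem_or_mem hxs).resolve_right (hs m hm))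

lemma not_mem_of_nonZeroDivisor [IsReduced R] {q : Ideal R}
    (hq : q ∈ minimalPrimes R) {s : R} (hs : s ∈ nonZeroDivisors R) : s ∉ q := by
  intro hsq
  haveI : q.IsPrime := hq.1.1
  have h1 : algebraMap R (Localization q.primeCompl) s ∈
      IsLocalRing.maximalIdeal (Localization q.primeCompl) := by
    rw [← Localization.AtPrime.map_eq_maximalIdeal]
    exact Ideal.mem_map_of_mem _ hsq
  have h2 : IsNilpotent (algebraMap R (Localization q.primeCompl) s) :=
    by
      haveI : Ring.KrullDimLE 0 (Localization.AtPrime q) := .of_isLocalization _ hq _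
      exact Ring.KrullDimLE.isNilpotent_iff_mem_maximalIdeal.mpr h1
  have h3 : algebraMap R (Localization q.primeCompl) s = 0 := h2.eq_zero
  rw [IsLocalization.map_eq_zero_iff q.primeCompl] at h3
  obtain ⟨m, hm⟩ := h3
  have hm0 : (m : R) = 0 := mem_nonZeroDivisors_iff_right.mp hs (m : R) hm
  exact m.2 (by rw [hm0]; exact q.zero_mem)

lemma exists_sep [Fintype (minimalPrimes R)] (i : minimalPrimes R) :
    ∃ x : R, x ∉ (i : Ideal R) ∧ ∀ j : minimalPrimes R, j ≠ i → x ∈ (j : Ideal R) := by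
  classical
  have hle : ¬ ((Finset.univ.erase i).inf (fun j : minimalPrimes R => (j : Ideal R)) ≤
      (i : Ideal R)) := by
    intro hle
    obtain ⟨j, hj, hji⟩ := (Ideal.IsPrime.inf_le' inferInstance).mp hle
    have hji' : (i : Ideal R) ≤ (j : Ideal R) := i.2.2 ⟨inferInstance, bot_le⟩ hji
    exact (Finset.mem_erase.mp hj).1 (Subtype.ext (le_antisymm hji hji'))
  obtain ⟨x, hx1, hx2⟩ := SetLike.not_le_iff_exists.mp hle
  refine ⟨x, hx2, fun j hj => ?_⟩
  have hle2 : (Finset.univ.erase i).inf (fun j : minimalPrimes R => (j : Ideal R)) ≤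
      (j : Ideal R) := Finset.inf_le (Finset.mem_erase.mpr ⟨hj, Finset.mem_univ j⟩)
  exact hle2 hx1

lemma isLocalization [IsReduced R] [Fintype (minimalPrimes R)] :
    IsLocalization (nonZeroDivisors R) (P R) := by
  classical
  rw [isLocalization_iff]
  refine ⟨?_, ?_, ?_⟩
  · -- map_units
    rintro ⟨y, hy⟩
    refine isUnit_iff_exists_inv.mpr ⟨fun q => (algebraMap R (P R) y q)⁻¹, funext fun q => ?_⟩
    have hne : algebraMap R (P R) y q ≠ 0 := by
      rw [algebraMap_P_apply, Ne, IsFractionRing.to_map_eq_zero_iff,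
        Ideal.Quotient.eq_zero_iff_mem]
      exact not_mem_of_nonZeroDivisor q.2 hy
    exact mul_inv_cancel₀ hne
  · -- surj
    intro z
    have hsurj := fun q : minimalPrimes R =>
      IsLocalization.surj (M := nonZeroDivisors (Q R q)) (S := K R q) (z q)
    choose x hx using hsurj
    choose A hA using fun q : minimalPrimes R =>
      Ideal.Quotient.mk_surjective (I := (q : Ideal R)) (x q).1
    choose B hB using fun q : minimalPrimes R =>
      Ideal.Quotient.mk_surjective (I := (q : Ideal R)) ((x q).2 : Q R q)
    choose e he1 he2 using fun i : minimalPrimes R => exists_sep i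
    have hmk : ∀ (c : minimalPrimes R → R) (j : minimalPrimes R),
        Ideal.Quotient.mk (j : Ideal R) (∑ i, e i * c i) =
          Ideal.Quotient.mk (j : Ideal R) (e j) * Ideal.Quotient.mk (j : Ideal R) (c j) := by
      intro c j
      rw [map_sum, Finset.sum_eq_single j]
      · rw [map_mul]
      · intro i _ hij
        rw [Ideal.Quotient.eq_zero_iff_mem]
        exact Ideal.mul_mem_right _ _ (he2 i j (Ne.symm hij))
      · intro h; exact absurd (Finset.mem_univ j) h
    have hs : (∑ i, e i * B i) ∈ nonZeroDivisors R := by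
      refine mem_nonZeroDivisors_of_forall fun I hI hsI => ?_
      set j : minimalPrimes R := ⟨I, hI⟩
      haveI : (j : Ideal R).IsPrime := j.2.1.1
      haveI : IsDomain (Q R j) := Ideal.Quotient.isDomain _
      have h0 : Ideal.Quotient.mk (j : Ideal R) (∑ i, e i * B i) = 0 :=
        Ideal.Quotient.eq_zero_iff_mem.mpr hsI
      rw [hmk B j, hB j] at h0
      rcases mul_eq_zero.mp h0 with h | h
      · exact he1 j (Ideal.Quotient.eq_zero_iff_mem.mp h)
      · exact nonZeroDivisors.ne_zero (x j).2.2 h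
    refine ⟨⟨∑ i, e i * A i, ⟨∑ i, e i * B i, hs⟩⟩, funext fun q => ?_⟩
    show z q * algebraMap R (P R) (∑ i, e i * B i) q = algebraMap R (P R) (∑ i, e i * A i) q
    rw [algebraMap_P_apply, algebraMap_P_apply, hmk B q, hmk A q, hB q, hA q,
      map_mul, map_mul]
    rw [mul_left_comm, hx q]
  · -- exists_of_eq
    intro a b hab
    refine ⟨1, ?_⟩
    simp only [OneMemClass.coe_one, one_mul]
    have hq : ∀ I ∈ minimalPrimes R, a - b ∈ I := by
      intro I hI
      have h1 := congrFun hab (⟨I, hI⟩ : minimalPrimes R)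
      rw [algebraMap_P_apply, algebraMap_P_apply] at h1
      have h2 := IsFractionRing.injective (Q R ⟨I, hI⟩) (K R ⟨I, hI⟩) h1
      exact Ideal.Quotient.eq.mp h2
    have hnil : IsNilpotent (a - b) := nilpotent_iff_mem_prime.mpr fun p hp => by
      haveI := hp
      obtain ⟨m, hm, hmle⟩ := Ideal.exists_minimalPrimes_le (J := p) bot_le
      exact hmle (hq m hm)
    have := hnil.eq_zero
    rw [sub_eq_zero] at this
    exact this

lemma mem_integralClosure_iff [Fintype (minimalPrimes R)] (x : P R) :
    x ∈ integralClosure R (P R) ↔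
      ∀ q : minimalPrimes R, x q ∈ integralClosure (Q R q) (K R q) := by
  classical
  have hcomp : ∀ q : minimalPrimes R,
      (Pi.evalRingHom (fun q => K R q) q).comp (algebraMap R (P R)) =
        (algebraMap (Q R q) (K R q)).comp (Ideal.Quotient.mk (q : Ideal R)) :=
    fun q => RingHom.ext fun r => rfl
  constructor
  · intro hx q
    obtain ⟨p, pm, hp⟩ := hx
    refine ⟨p.map (Ideal.Quotient.mk (q : Ideal R)), pm.map _, ?_⟩
    have h1 := Polynomial.hom_eval₂ p (algebraMap R (P R))
      (Pi.evalRingHom (fun q => K R q) q) x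
    rw [hp, map_zero, hcomp q] at h1
    rw [Polynomial.eval₂_map]
    exact h1.symm
  · intro hx
    have hsum : x = ∑ q, Pi.single q (x q) := (Finset.univ_sum_single x).symm
    rw [hsum]
    refine Subalgebra.sum_mem _ fun q _ => ?_
    obtain ⟨p', pm', hp'⟩ := hx q
    obtain ⟨p0, hp0⟩ := Polynomial.map_surjective (Ideal.Quotient.mk (q : Ideal R))
      Ideal.Quotient.mk_surjective p'
    obtain ⟨p, hpmap, -, pmon⟩ := Polynomial.lifts_and_degree_eq_and_monic
      ((Polynomial.mem_lifts _).mpr ⟨p0, hp0⟩) pm'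
    refine ⟨X * p, (monic_X.mul pmon), funext fun q' => ?_⟩
    have h1 := Polynomial.hom_eval₂ (X * p) (algebraMap R (P R))
      (Pi.evalRingHom (fun q => K R q) q') (Pi.single q (x q))
    rw [hcomp q'] at h1
    show (Polynomial.eval₂ (algebraMap R (P R)) (Pi.single q (x q)) (X * p)) q' =
      (0 : P R) q'
    rw [show (Polynomial.eval₂ (algebraMap R (P R)) (Pi.single q (x q)) (X * p)) q' =
        (Pi.evalRingHom (fun q => K R q) q')
          (Polynomial.eval₂ (algebraMap R (P R)) (Pi.single q (x q)) (X * p)) from rfl,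
      h1, Polynomial.eval₂_mul, Polynomial.eval₂_X]
    by_cases hqq : q' = q
    · subst hqq
      rw [show (Pi.evalRingHom (fun q => K R q) q') (Pi.single q' (x q')) = x q' from
        by simp, ← Polynomial.eval₂_map, hpmap, hp', mul_zero]
      rfl
    · rw [show (Pi.evalRingHom (fun q => K R q) q') (Pi.single q (x q)) = 0 from
        by simp [Pi.single_eq_of_ne hqq], zero_mul]
      rfl

end Statement5Aux

end Statement5Aux
/-- For a reduced Noetherian ring `R` with minimal primes `q₁, …, qₙ`, the
integral closure of `R` in its total ring of fractions is isomorphic, compatibly with the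
maps from `R`, to the product of the normalizations of the quotient domains `R/qᵢ`. -/
theorem statement5 (R : Type) [CommRing R] [IsReduced R] [IsNoetherianRing R] :
    ∃ e : ↥(integralClosure R (FractionRing R)) ≃+*
        (Π q : minimalPrimes R,
          ↥(integralClosure (R ⧸ (q : Ideal R)) (FractionRing (R ⧸ (q : Ideal R))))),
      ∀ r : R, e (algebraMap R ↥(integralClosure R (FractionRing R)) r) =
        fun q : minimalPrimes R =>
          algebraMap (R ⧸ (q : Ideal R))
            ↥(integralClosure (R ⧸ (q : Ideal R)) (FractionRing (R ⧸ (q : Ideal R))))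
            (Ideal.Quotient.mk (q : Ideal R) r) := by
  classical
  haveI : Fintype (minimalPrimes R) := (minimalPrimes.finite_of_isNoetherianRing R).fintype
  haveI hloc : IsLocalization (nonZeroDivisors R) (Statement5Aux.P R) :=
    Statement5Aux.isLocalization
  let e : FractionRing R ≃ₐ[R] Statement5Aux.P R :=
    IsLocalization.algEquiv (nonZeroDivisors R) (FractionRing R) (Statement5Aux.P R)
  have key : ∀ (A B : Type) (_ : CommRing A) (_ : CommRing B) (_ : Algebra R A)
      (_ : Algebra R B) (f : A →ₐ[R] B) (x : A), IsIntegral R x → IsIntegral R (f x) := by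
    rintro A B _ _ _ _ f x ⟨p, pm, hp⟩
    refine ⟨p, pm, ?_⟩
    have h1 := Polynomial.hom_eval₂ p (algebraMap R A) f.toRingHom x
    rw [hp, map_zero] at h1
    have h2 : (f.toRingHom).comp (algebraMap R A) = algebraMap R B :=
      RingHom.ext fun r => f.commutes r
    rw [h2] at h1
    exact h1.symm
  have hmapint : ∀ x : FractionRing R, IsIntegral R x → IsIntegral R (e x) :=
    fun x hx => key _ _ _ _ _ _ e.toAlgHom x hx
  have hmapint' : ∀ y : Statement5Aux.P R, IsIntegral R y → IsIntegral R (e.symm y) :=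
    fun y hy => key _ _ _ _ _ _ e.symm.toAlgHom y hy
  let E1 : ↥(integralClosure R (FractionRing R)) ≃+*
      ↥(integralClosure R (Statement5Aux.P R)) :=
    { toFun := fun x => ⟨e x.1, hmapint x.1 x.2⟩
      invFun := fun y => ⟨e.symm y.1, hmapint' y.1 y.2⟩
      left_inv := fun x => Subtype.ext (e.symm_apply_apply x.1)
      right_inv := fun y => Subtype.ext (e.apply_symm_apply y.1)
      map_mul' := fun x y => Subtype.ext (map_mul e x.1 y.1)
      map_add' := fun x y => Subtype.ext (map_add e x.1 y.1) }
  let E2 : ↥(integralClosure R (Statement5Aux.P R)) ≃+*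
      (Π q : minimalPrimes R,
        ↥(integralClosure (R ⧸ (q : Ideal R)) (FractionRing (R ⧸ (q : Ideal R))))) :=
    { toFun := fun x q => ⟨x.1 q, (Statement5Aux.mem_integralClosure_iff x.1).mp x.2 q⟩
      invFun := fun y => ⟨fun q => (y q : _),
        (Statement5Aux.mem_integralClosure_iff _).mpr fun q => (y q).2⟩
      left_inv := fun x => rfl
      right_inv := fun y => rfl
      map_mul' := fun x y => rfl
      map_add' := fun x y => rfl }
  refine ⟨E1.trans E2, fun r => ?_⟩
  funext q
  apply Subtype.ext
  show e (algebraMap R (FractionRing R) r) q =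
    algebraMap (R ⧸ (q : Ideal R)) (FractionRing (R ⧸ (q : Ideal R)))
      (Ideal.Quotient.mk (q : Ideal R) r)
  rw [AlgEquiv.commutes]
  rfl
end

section
/- The ring R = (ℤ/2ℤ)[t, x, y]/(x² − t·y²) is seminormal (though it is not weakly normal). -/
universe u v

set_option synthInstance.maxHeartbeats 1000000
set_option maxHeartbeats 1000000

open Polynomial

noncomputable section SN10

abbrev Fq := ZMod 2
abbrev PP := MvPolynomial (Fin 3) Fq
abbrev SS := Polynomial (Polynomial Fq)

/-- the outer variable `u` -/
noncomputable def uv : SS := X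
/-- the inner variable `y` -/
noncomputable def yv : SS := C X

noncomputable def gP : PP := MvPolynomial.X 1 ^ 2 - MvPolynomial.X 0 * MvPolynomial.X 2 ^ 2

noncomputable def φS : PP →+* SS :=
  MvPolynomial.eval₂Hom ((C : Polynomial Fq →+* SS).comp (C : Fq →+* Polynomial Fq))
    ![uv ^ 2, uv * yv, yv]

@[simp] lemma φS_C (a : Fq) : φS (MvPolynomial.C a) = C (C a) := by
  simp [φS]

@[simp] lemma φS_X0 : φS (MvPolynomial.X 0) = uv ^ 2 := by simp [φS]
@[simp] lemma φS_X1 : φS (MvPolynomial.X 1) = uv * yv := by simp [φS]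
@[simp] lemma φS_X2 : φS (MvPolynomial.X 2) = yv := by simp [φS]

lemma φS_g : φS gP = 0 := by
  simp [gP]
  ring

/-- the expand-by-2 map on SS (outer variable) -/
noncomputable def e2 : SS →+* SS := (Polynomial.expand (Polynomial Fq) 2).toRingHom

@[simp] lemma e2_apply (s : SS) : e2 s = Polynomial.expand (Polynomial Fq) 2 s := rfl

/-- the expand-by-2 map on `F[u]` -/
noncomputable def e2' : Polynomial Fq →+* Polynomial Fq := (Polynomial.expand Fq 2).toRingHom

@[simp] lemma e2'_apply (s : Polynomial Fq) : e2' s = Polynomial.expand Fq 2 s := rfl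

/-- set y = 0 -/
noncomputable def ε : SS →+* Polynomial Fq := Polynomial.mapRingHom (Polynomial.evalRingHom 0)

/-- inner lift F[Y] → PP, Y ↦ X 2 -/
noncomputable def νin : Polynomial Fq →+* PP :=
  Polynomial.eval₂RingHom (MvPolynomial.C) (MvPolynomial.X 2)

/-- lift SS → PP, outer X ↦ X 0, inner Y ↦ X 2 -/
noncomputable def ν : SS →+* PP := Polynomial.eval₂RingHom νin (MvPolynomial.X 0)

/-- lift F[u] → PP, u ↦ X 0 -/
noncomputable def lam0 : Polynomial Fq →+* PP :=
  Polynomial.eval₂RingHom (MvPolynomial.C) (MvPolynomial.X 0)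

/-- evaluation P → F[u] : t ↦ u, x ↦ 0, y ↦ 0 -/
noncomputable def μ : PP →+* Polynomial Fq :=
  MvPolynomial.eval₂Hom (C : Fq →+* Polynomial Fq) ![X, 0, 0]

lemma φS_νin (q : Polynomial Fq) : φS (νin q) = C q := by
  have : φS.comp νin = (C : Polynomial Fq →+* SS) := by
    apply Polynomial.ringHom_ext <;> simp [νin, yv]
  exact RingHom.congr_fun this q

lemma φS_ν (s : SS) : φS (ν s) = e2 s := by
  have : φS.comp ν = e2 := by
    apply Polynomial.ringHom_ext
    · intro a; simp [ν, φS_νin, e2]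
    · simp [ν, φS_νin, e2, uv, Polynomial.expand_X]
  exact RingHom.congr_fun this s

lemma φS_lam0 (h : Polynomial Fq) : φS (lam0 h) = e2 (h.map (C : Fq →+* Polynomial Fq)) := by
  have : φS.comp lam0 = e2.comp (Polynomial.mapRingHom (C : Fq →+* Polynomial Fq)) := by
    apply Polynomial.ringHom_ext
    · intro a; simp [lam0, e2]
    · simp [lam0, e2, uv, Polynomial.expand_X]
  exact RingHom.congr_fun this h

lemma μ_lam0 (h : Polynomial Fq) : μ (lam0 h) = h := by
  have : μ.comp lam0 = RingHom.id _ := by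
    apply Polynomial.ringHom_ext <;> simp [lam0, μ]
  exact RingHom.congr_fun this h

lemma ε_φS (p : PP) : ε (φS p) = e2' (μ p) := by
  have : ε.comp φS = e2'.comp μ := by
    apply MvPolynomial.ringHom_ext
    · intro r; simp [ε, μ, e2']
    · intro i
      fin_cases i <;>
        simp [ε, μ, e2', uv, yv, Polynomial.expand_X]
  exact RingHom.congr_fun this p


/-- "good" : no odd-u-power, y-free monomials -/
def good (s : SS) : Prop := ∀ k : ℕ, ((s.coeff (2 * k + 1)).coeff 0) = 0

lemma good_φS (p : PP) : good (φS p) := by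
  induction p using MvPolynomial.induction_on with
  | C a => intro k; simp [coeff_C]
  | add p q hp hq => intro k; simp [map_add, hp k, hq k]
  | mul_X p n hp =>
      fin_cases n
      · -- multiply by u^2
        intro k
        rw [map_mul, show (MvPolynomial.X ((fun i => i) (⟨0, by omega⟩ : Fin 3)) : PP) = MvPolynomial.X 0 from rfl, φS_X0]
        have : (φS p * uv ^ 2).coeff (2 * k + 1)
            = if 2 ≤ 2 * k + 1 then (φS p).coeff (2 * k + 1 - 2) else 0 := by
          simpa [uv] using Polynomial.coeff_mul_X_pow' (φS p) 2 (2 * k + 1)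
        rw [this]
        rcases k with _ | k
        · simp
        · have h2 : 2 ≤ 2 * (k + 1) + 1 := by omega
          rw [if_pos h2]
          have : 2 * (k + 1) + 1 - 2 = 2 * k + 1 := by omega
          rw [this]
          exact hp k
      · -- multiply by u*y
        intro k
        rw [map_mul, show (MvPolynomial.X ((fun i => i) (⟨1, by omega⟩ : Fin 3)) : PP) = MvPolynomial.X 1 from rfl, φS_X1]
        have h1 : (φS p * (uv * yv)).coeff (2 * k + 1) = (φS p).coeff (2 * k) * X := by
          have : φS p * (uv * yv) = (φS p * C X) * X := by simp [uv, yv]; ring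
          rw [this]
          rcases Nat.exists_eq_add_of_le (Nat.le_add_left 1 (2*k)) with ⟨_, _⟩
          rw [show 2 * k + 1 = (2 * k) + 1 from rfl, Polynomial.coeff_mul_X,
            Polynomial.coeff_mul_C]
        rw [h1]
        exact Polynomial.X_dvd_iff.mp (Dvd.intro _ (mul_comm _ _))
      · -- multiply by y
        intro k
        rw [map_mul, show (MvPolynomial.X ((fun i => i) (⟨2, by omega⟩ : Fin 3)) : PP) = MvPolynomial.X 2 from rfl, φS_X2]
        rw [show φS p * yv = φS p * C X from rfl, Polynomial.coeff_mul_C]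
        exact Polynomial.X_dvd_iff.mp (Dvd.intro _ (mul_comm _ _))

lemma odd_part_zero (h : Polynomial Fq) (p : PP)
    (heq : X * e2 (h.map (C : Fq →+* Polynomial Fq)) = φS p) : h = 0 := by
  ext k
  have hg := good_φS p k
  rw [← heq] at hg
  rw [Polynomial.coeff_X_mul] at hg
  rw [e2_apply, Polynomial.coeff_expand (by norm_num)] at hg
  simp only [show (2 : ℕ) ∣ 2 * k from ⟨k, rfl⟩, if_true, Nat.mul_div_cancel_left k
    (by norm_num : 0 < 2)] at hg
  rw [Polynomial.coeff_map] at hg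
  simpa using hg

/-- even/odd split -/
lemma split (s : SS) : ∃ a b : SS, s = e2 a + X * e2 b := by
  induction s using Polynomial.induction_on' with
  | add p q hp hq =>
      obtain ⟨a₁, b₁, rfl⟩ := hp
      obtain ⟨a₂, b₂, rfl⟩ := hq
      exact ⟨a₁ + a₂, b₁ + b₂, by rw [map_add, map_add]; ring⟩
  | monomial n a =>
      rcases Nat.even_or_odd n with ⟨m, hm⟩ | ⟨m, hm⟩
      · refine ⟨C a * X ^ m, 0, ?_⟩
        subst hm
        simp only [map_mul, map_zero, mul_zero, add_zero, map_pow, e2_apply,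
          Polynomial.expand_C, Polynomial.expand_X]
        rw [← pow_mul, ← Polynomial.C_mul_X_pow_eq_monomial]
        ring_nf
      · refine ⟨0, C a * X ^ m, ?_⟩
        subst hm
        simp only [map_mul, map_zero, zero_add, map_pow, e2_apply,
          Polynomial.expand_C, Polynomial.expand_X]
        rw [← pow_mul, ← Polynomial.C_mul_X_pow_eq_monomial]
        ring_nf


/-- normal form modulo g : every `p` is congruent to `ν a + X1 * ν b` -/
lemma normal_form (p : PP) :
    ∃ a b : SS, p - (ν a + MvPolynomial.X 1 * ν b) ∈ Ideal.span {gP} := by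
  induction p using MvPolynomial.induction_on with
  | C c =>
      refine ⟨C (C c), 0, ?_⟩
      have : ν (C (C c)) = MvPolynomial.C c := by simp [ν, νin]
      rw [this]
      simp
  | add p q hp hq =>
      obtain ⟨a₁, b₁, h₁⟩ := hp
      obtain ⟨a₂, b₂, h₂⟩ := hq
      refine ⟨a₁ + a₂, b₁ + b₂, ?_⟩
      have := Ideal.add_mem _ h₁ h₂
      convert this using 1
      rw [map_add, map_add]
      ring
  | mul_X p n hp =>
      obtain ⟨a, b, hab⟩ := hp
      fin_cases n
      · -- times X 0 ; ν X = X 0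
        rw [show (MvPolynomial.X ((fun i => i) (⟨0, by omega⟩ : Fin 3)) : PP) = MvPolynomial.X 0 from rfl]
        refine ⟨a * X, b * X, ?_⟩
        have hX : ν (X : SS) = MvPolynomial.X 0 := by simp [ν]
        have : p * MvPolynomial.X 0 - (ν (a * X) + MvPolynomial.X 1 * ν (b * X))
            = (p - (ν a + MvPolynomial.X 1 * ν b)) * MvPolynomial.X 0 := by
          rw [map_mul, map_mul, hX]; ring
        rw [this]
        exact Ideal.mul_mem_right _ _ hab
      · -- times X 1
        rw [show (MvPolynomial.X ((fun i => i) (⟨1, by omega⟩ : Fin 3)) : PP) = MvPolynomial.X 1 from rfl]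
        refine ⟨b * X * C X ^ 2, a, ?_⟩
        have hX : ν (X : SS) = MvPolynomial.X 0 := by simp [ν]
        have hY : ν (C X : SS) = MvPolynomial.X 2 := by simp [ν, νin]
        have key : p * MvPolynomial.X 1 - (ν (b * X * C X ^ 2) + MvPolynomial.X 1 * ν a)
            = (p - (ν a + MvPolynomial.X 1 * ν b)) * MvPolynomial.X 1 + ν b * gP := by
          rw [map_mul, map_mul, map_pow, hX, hY, gP]; ring
        rw [key]
        exact Ideal.add_mem _ (Ideal.mul_mem_right _ _ hab)
          (Ideal.mul_mem_left _ _ (Ideal.subset_span rfl))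
      · -- times X 2
        rw [show (MvPolynomial.X ((fun i => i) (⟨2, by omega⟩ : Fin 3)) : PP) = MvPolynomial.X 2 from rfl]
        refine ⟨a * C X, b * C X, ?_⟩
        have hY : ν (C X : SS) = MvPolynomial.X 2 := by simp [ν, νin]
        have : p * MvPolynomial.X 2 - (ν (a * C X) + MvPolynomial.X 1 * ν (b * C X))
            = (p - (ν a + MvPolynomial.X 1 * ν b)) * MvPolynomial.X 2 := by
          rw [map_mul, map_mul, hY]; ring
        rw [this]
        exact Ideal.mul_mem_right _ _ hab

lemma parity_eq_zero {a b : SS} (h : e2 a + X * (C X * e2 b) = 0) : a = 0 ∧ b = 0 := by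
  have ha : a = 0 := by
    ext k
    have hco := congrArg (fun s => Polynomial.coeff s (2 * k)) h
    simp only [Polynomial.coeff_add, Polynomial.coeff_zero] at hco
    have hx : (X * (C X * e2 b)).coeff (2 * k) = 0 := by
      rcases k with _ | k
      · exact Polynomial.coeff_X_mul_zero _
      · have h21 : 2 * (k + 1) = (2 * k + 1) + 1 := by ring
        rw [h21, Polynomial.coeff_X_mul, Polynomial.coeff_C_mul, e2_apply,
          Polynomial.coeff_expand (by norm_num)]
        have : ¬ (2 ∣ 2 * k + 1) := by omega
        rw [if_neg this, mul_zero]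
    rw [hx, add_zero] at hco
    rw [e2_apply, Polynomial.coeff_expand (by norm_num)] at hco
    have hak : a.coeff k = 0 := by
      simpa [Nat.mul_div_cancel_left] using hco
    simp [hak]
  refine ⟨ha, ?_⟩
  rw [ha, map_zero, zero_add] at h
  have hX : (X : SS) ≠ 0 := Polynomial.X_ne_zero
  have hCX : (C X : SS) ≠ 0 := by
    simp only [ne_eq, Polynomial.C_eq_zero]
    exact Polynomial.X_ne_zero
  have : e2 b = 0 := by
    rcases mul_eq_zero.mp h with h' | h'
    · exact absurd h' hX
    · rcases mul_eq_zero.mp h' with h'' | h''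
      · exact absurd h'' hCX
      · exact h''
  have := Polynomial.expand_injective (n := 2) (by norm_num) (by simpa [e2_apply] using this.trans (map_zero _).symm)
  simpa using this

lemma ker_φS {p : PP} (h : φS p = 0) : p ∈ Ideal.span {gP} := by
  obtain ⟨a, b, hab⟩ := normal_form p
  have hspan : φS (p - (ν a + MvPolynomial.X 1 * ν b)) = 0 := by
    rw [Ideal.mem_span_singleton] at hab
    obtain ⟨c, hc⟩ := hab
    rw [hc, map_mul, φS_g, zero_mul]
  have heq : e2 a + X * (C X * e2 b) = 0 := by
    have := hspan
    rw [map_sub, h, zero_sub, neg_eq_zero, map_add, map_mul, φS_X1, φS_ν, φS_ν] at this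
    rw [← this, uv, yv]
    ring
  obtain ⟨ha, hb⟩ := parity_eq_zero heq
  have : p = p - (ν a + MvPolynomial.X 1 * ν b) := by rw [ha, hb]; simp
  rw [this]
  exact hab

/-- clearing denominators: `s * y^n` is in the image of `φS` -/
lemma clear_denom (s : SS) : ∃ (n : ℕ) (p : PP), s * yv ^ n = φS p := by
  induction s using Polynomial.induction_on' with
  | add p q hp hq =>
      obtain ⟨n₁, p₁, h₁⟩ := hp
      obtain ⟨n₂, p₂, h₂⟩ := hq
      refine ⟨n₁ + n₂, p₁ * MvPolynomial.X 2 ^ n₂ + p₂ * MvPolynomial.X 2 ^ n₁, ?_⟩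
      rw [map_add, map_mul, map_mul, map_pow, map_pow, φS_X2, ← h₁, ← h₂]
      ring
  | monomial n a =>
      refine ⟨n, νin a * MvPolynomial.X 1 ^ n, ?_⟩
      rw [map_mul, map_pow, φS_X1, φS_νin]
      rw [← Polynomial.C_mul_X_pow_eq_monomial]
      rw [uv, yv]
      ring

/-- decomposition: every element of SS is (image of φS) + odd y-free part -/
lemma decomposition (s : SS) :
    ∃ (p : PP) (h : Polynomial Fq),
      s = φS p + X * e2 (h.map (C : Fq →+* Polynomial Fq)) := by
  obtain ⟨a, b, rfl⟩ := split s
  have hdvd : (yv : SS) ∣ (b - (ε b).map (C : Fq →+* Polynomial Fq)) := by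
    rw [yv, Polynomial.C_dvd_iff_dvd_coeff]
    intro i
    rw [Polynomial.X_dvd_iff]
    have h1 : ((ε b).map (C : Fq →+* Polynomial Fq)).coeff i = C ((b.coeff i).eval 0) := by
      rw [Polynomial.coeff_map]
      congr 1
      simp [ε]
    rw [Polynomial.coeff_sub, h1]
    simp [Polynomial.coeff_zero_eq_eval_zero]
  obtain ⟨b₂, hb₂⟩ := hdvd
  refine ⟨ν a + MvPolynomial.X 1 * ν b₂, ε b, ?_⟩
  rw [map_add, map_mul, φS_X1, φS_ν, φS_ν]
  have hb : b = yv * b₂ + (ε b).map (C : Fq →+* Polynomial Fq) := by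
    rw [← hb₂]; ring
  have hyv : e2 yv = yv := by rw [yv]; exact Polynomial.expand_C 2 X
  have h3 : e2 b - e2 ((ε b).map (C : Fq →+* Polynomial Fq)) = C X * e2 b₂ := by
    calc e2 b - e2 ((ε b).map (C : Fq →+* Polynomial Fq))
        = e2 (b - (ε b).map (C : Fq →+* Polynomial Fq)) := (map_sub e2 _ _).symm
      _ = e2 (yv * b₂) := by rw [hb₂]
      _ = C X * e2 b₂ := by rw [map_mul, hyv, yv]
  rw [uv, yv]
  linear_combination X * h3

/-- ψ : R → SS -/
noncomputable def ψ : (PP ⧸ Ideal.span {gP}) →+* SS :=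
  Ideal.Quotient.lift (Ideal.span {gP}) φS (by
    intro a ha
    rw [Ideal.mem_span_singleton] at ha
    obtain ⟨c, hc⟩ := ha
    rw [hc, map_mul, φS_g, zero_mul])

@[simp] lemma ψ_mk (p : PP) : ψ (Ideal.Quotient.mk _ p) = φS p :=
  Ideal.Quotient.lift_mk _ _ _

lemma ψ_injective : Function.Injective ψ := by
  rw [injective_iff_map_eq_zero]
  intro a ha
  obtain ⟨p, rfl⟩ := Ideal.Quotient.mk_surjective a
  rw [ψ_mk] at ha
  rw [Ideal.Quotient.eq_zero_iff_mem]
  exact ker_φS ha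

end SN10
open MvPolynomial in
/-- The ring `(ℤ/2ℤ)[t,x,y]/(x² − t·y²)` is seminormal
(here `t, x, y` are the variables `X 0, X 1, X 2`). -/
theorem statement10 :
    IsSeminormalRing
      (MvPolynomial (Fin 3) (ZMod 2) ⧸
        Ideal.span {(X 1 : MvPolynomial (Fin 3) (ZMod 2)) ^ 2 - X 0 * X 2 ^ 2}) := by
  show IsSeminormalRing (PP ⧸ Ideal.span {gP})
  intro B _inst f hinj hfin hbir _hspec hres
  classical
  have hσinj : Function.Injective (algebraMap SS (FractionRing SS)) :=
    IsFractionRing.injective SS (FractionRing SS)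
  have hθinj : Function.Injective ((algebraMap SS (FractionRing SS)).comp ψ) :=
    hσinj.comp ψ_injective
  haveI : IsDomain (PP ⧸ Ideal.span {gP}) := ψ_injective.isDomain ψ
  letI : Algebra (PP ⧸ Ideal.span {gP}) (FractionRing SS) :=
    ((algebraMap SS (FractionRing SS)).comp ψ).toAlgebra
  have hθ : (algebraMap (PP ⧸ Ideal.span {gP}) (FractionRing SS))
      = (algebraMap SS (FractionRing SS)).comp ψ :=
    RingHom.algebraMap_toAlgebra _
  haveI hfrac : IsFractionRing (PP ⧸ Ideal.span {gP}) (FractionRing SS) := by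
    refine ⟨?_, ?_, ?_⟩
    · intro y
      have hy0 : (y : PP ⧸ Ideal.span {gP}) ≠ 0 := nonZeroDivisors.ne_zero y.2
      have hne : algebraMap (PP ⧸ Ideal.span {gP}) (FractionRing SS) y ≠ 0 := by
        rw [hθ]
        intro h0
        exact hy0 (hθinj (by simpa using h0))
      exact isUnit_iff_ne_zero.mpr hne
    · intro z
      obtain ⟨⟨s₁, s₂⟩, hz⟩ := IsLocalization.mk'_surjective (nonZeroDivisors SS) z
      obtain ⟨n₁, p₁, h₁⟩ := clear_denom s₁
      obtain ⟨n₂, p₂, h₂⟩ := clear_denom (s₂ : SS)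
      have hψnum : ψ (Ideal.Quotient.mk _ (p₁ * MvPolynomial.X 2 ^ n₂))
          = s₁ * yv ^ (n₁ + n₂) := by
        rw [ψ_mk, map_mul, map_pow, φS_X2, ← h₁, pow_add]; ring
      have hψden : ψ (Ideal.Quotient.mk _ (p₂ * MvPolynomial.X 2 ^ n₁))
          = (s₂ : SS) * yv ^ (n₁ + n₂) := by
        rw [ψ_mk, map_mul, map_pow, φS_X2, ← h₂, pow_add]; ring
      have hyv0 : (yv : SS) ≠ 0 := by
        rw [yv]; simp only [ne_eq, Polynomial.C_eq_zero]; exact Polynomial.X_ne_zero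
      have hden0 : (Ideal.Quotient.mk (Ideal.span {gP}) (p₂ * MvPolynomial.X 2 ^ n₁)) ≠ 0 := by
        intro h0
        have : ψ (Ideal.Quotient.mk _ (p₂ * MvPolynomial.X 2 ^ n₁)) = 0 := by rw [h0, map_zero]
        rw [hψden] at this
        exact (mul_ne_zero (nonZeroDivisors.ne_zero s₂.2) (pow_ne_zero _ hyv0)) this
      refine ⟨⟨Ideal.Quotient.mk _ (p₁ * MvPolynomial.X 2 ^ n₂),
        ⟨Ideal.Quotient.mk _ (p₂ * MvPolynomial.X 2 ^ n₁),
          mem_nonZeroDivisors_of_ne_zero hden0⟩⟩, ?_⟩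
      simp only [hθ, RingHom.comp_apply]
      rw [hψnum, hψden, map_mul, map_mul, ← mul_assoc, ← hz, IsLocalization.mk'_spec]
    · intro x y hxy
      rw [hθ] at hxy
      exact ⟨1, by rw [hθinj hxy]⟩
  obtain ⟨hle, hbij⟩ := hbir
  set Frm := IsLocalization.map (M := nonZeroDivisors (PP ⧸ Ideal.span {gP}))
      (S := FractionRing (PP ⧸ Ideal.span {gP}))
      (T := nonZeroDivisors B) (FractionRing B) f hle with hFrm
  set e : FractionRing (PP ⧸ Ideal.span {gP}) ≃+* FractionRing B :=
    RingEquiv.ofBijective Frm hbij with he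
  set E := IsLocalization.algEquiv (nonZeroDivisors (PP ⧸ Ideal.span {gP}))
      (FractionRing (PP ⧸ Ideal.span {gP})) (FractionRing SS) with hE
  set ι : B →+* FractionRing SS :=
    (E.toRingEquiv.toRingHom.comp e.symm.toRingHom).comp (algebraMap B (FractionRing B))
    with hιdef
  have hι : ∀ r, ι (f r) = algebraMap (PP ⧸ Ideal.span {gP}) (FractionRing SS) r := by
    intro r
    have h1 : (algebraMap B (FractionRing B)) (f r)
        = Frm (algebraMap _ (FractionRing (PP ⧸ Ideal.span {gP})) r) :=
      (IsLocalization.map_eq hle r).symm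
    show E (e.symm ((algebraMap B (FractionRing B)) (f r))) = _
    rw [h1]
    have h2 : e.symm (Frm (algebraMap _ (FractionRing (PP ⧸ Ideal.span {gP})) r))
        = algebraMap _ (FractionRing (PP ⧸ Ideal.span {gP})) r := by
      have h3 : Frm (algebraMap _ (FractionRing (PP ⧸ Ideal.span {gP})) r)
          = e (algebraMap _ (FractionRing (PP ⧸ Ideal.span {gP})) r) := rfl
      rw [h3, RingEquiv.symm_apply_apply]
    rw [h2]
    exact E.commutes r
  have hιinj : Function.Injective ι := by
    intro a b hab
    have h1 : Function.Injective (algebraMap B (FractionRing B)) :=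
      IsLocalization.injective (FractionRing B) (le_refl (nonZeroDivisors B))
    exact h1 (e.symm.injective (E.injective hab))
  have hint := hfin.to_isIntegral
  have hβex : ∀ b : B, ∃ s : SS, algebraMap SS (FractionRing SS) s = ι b := by
    intro b
    obtain ⟨pol, hmon, hev⟩ := hint b
    have hcomp : (algebraMap SS (FractionRing SS)).comp ψ = ι.comp f := by
      rw [← hθ]; exact RingHom.ext fun r => (hι r).symm
    have h0 : Polynomial.eval₂ (algebraMap SS (FractionRing SS)) (ι b) (pol.map ψ) = 0 := by
      rw [Polynomial.eval₂_map, hcomp]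
      calc Polynomial.eval₂ (ι.comp f) (ι b) pol
          = ι (Polynomial.eval₂ f b pol) := (Polynomial.hom_eval₂ pol f ι b).symm
        _ = 0 := by rw [hev, map_zero]
    exact IsIntegrallyClosed.isIntegral_iff.mp ⟨pol.map ψ, hmon.map ψ, h0⟩
  choose βf hβf using hβex
  set β : B →+* SS :=
    { toFun := βf
      map_one' := hσinj (by simp only [hβf, map_one])
      map_mul' := fun a b => hσinj (by simp only [hβf, map_mul])
      map_zero' := hσinj (by simp only [hβf, map_zero])
      map_add' := fun a b => hσinj (by simp only [hβf, map_add]) } with hβdef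
  have hβspec : ∀ b, algebraMap SS (FractionRing SS) (β b) = ι b := hβf
  have hβfψ : ∀ r, β (f r) = ψ r := by
    intro r
    apply hσinj
    rw [hβspec, hι, hθ]
    rfl
  refine ⟨hinj, fun b => ?_⟩
  obtain ⟨p, h, hdec⟩ := decomposition (β b)
  by_cases hh : h = 0
  · subst hh
    rw [Polynomial.map_zero, map_zero, mul_zero, add_zero] at hdec
    refine ⟨Ideal.Quotient.mk _ p, ?_⟩
    apply hιinj
    rw [hι, hθ]
    show algebraMap SS (FractionRing SS) (ψ (Ideal.Quotient.mk _ p)) = ι b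
    rw [ψ_mk, ← hdec, hβspec]
  exfalso
  -- set up the bad element
  set b₁ := b - f (Ideal.Quotient.mk _ p) with hb₁def
  have hβb₁ : β b₁ = Polynomial.X * e2 (h.map (C : Fq →+* Polynomial Fq)) := by
    rw [hb₁def, map_sub, hβfψ, ψ_mk, hdec]; ring
  set c := f (Ideal.Quotient.mk _ (lam0 h)) with hcdef
  set π : B →+* Polynomial Fq := ε.comp β with hπdef
  set q : Ideal B := RingHom.ker π with hqdef
  haveI hqp : q.IsPrime := RingHom.ker_isPrime π
  have hεe2 : ε (e2 (h.map (C : Fq →+* Polynomial Fq))) = e2' h := by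
    show Polynomial.map (Polynomial.evalRingHom 0) (Polynomial.expand _ 2
      (h.map (C : Fq →+* Polynomial Fq))) = _
    rw [Polynomial.map_expand, Polynomial.map_map]
    have hid : (Polynomial.evalRingHom (0 : Fq)).comp (C : Fq →+* Polynomial Fq)
        = RingHom.id Fq := by
      ext a
      simp
    rw [hid, Polynomial.map_id]
    rfl
  have hπb₁ : π b₁ = Polynomial.X * e2' h := by
    show ε (β b₁) = _
    rw [hβb₁, map_mul, hεe2]
    congr 1
    show Polynomial.map (Polynomial.evalRingHom 0) Polynomial.X = Polynomial.X
    exact Polynomial.map_X _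
  have hπc : π c = e2' h := by
    show ε (β c) = _
    rw [hcdef, hβfψ, ψ_mk, ε_φS, μ_lam0]
  have he2h : e2' h ≠ 0 := by
    intro h0
    exact hh (Polynomial.expand_injective (n := 2) (by norm_num)
      (by rw [← e2'_apply, h0]; simp))
  have hcq : c ∉ q := by
    rw [hqdef, RingHom.mem_ker, hπc]
    exact he2h
  -- residue field embeddings into F(u)
  have hjL : Function.Injective (algebraMap (Polynomial Fq) (FractionRing (Polynomial Fq))) :=
    IsFractionRing.injective _ _
  set jL := algebraMap (Polynomial Fq) (FractionRing (Polynomial Fq)) with hjLdef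
  set π' : B →+* FractionRing (Polynomial Fq) := jL.comp π with hπ'def
  have hu : ∀ m : q.primeCompl, IsUnit (π' m) := by
    intro m
    have hm : π (m : B) ≠ 0 := m.2
    refine isUnit_iff_ne_zero.mpr fun h0 => hm (hjL ?_)
    rw [map_zero]
    exact h0
  set Λ₀ : Localization.AtPrime q →+* FractionRing (Polynomial Fq) :=
    IsLocalization.lift (S := Localization.AtPrime q) hu with hΛ₀def
  have hΛ₀max : ∀ z ∈ IsLocalRing.maximalIdeal (Localization.AtPrime q), Λ₀ z = 0 := by
    intro z hz
    rw [← Localization.AtPrime.map_eq_maximalIdeal] at hz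
    obtain ⟨xm, hxm⟩ := (IsLocalization.mem_map_algebraMap_iff q.primeCompl _).mp hz
    have h1 := congrArg Λ₀ hxm
    rw [map_mul, IsLocalization.lift_eq, IsLocalization.lift_eq] at h1
    have hx0 : π' ((xm.1 : B)) = 0 := by
      show jL (π (xm.1 : B)) = 0
      rw [show π (xm.1 : B) = 0 from xm.1.2, map_zero]
    rw [hx0] at h1
    rcases mul_eq_zero.mp h1 with h2 | h2
    · exact h2
    · exact absurd h2 (hu xm.2).ne_zero
  set Λ : IsLocalRing.ResidueField (Localization.AtPrime q) →+* FractionRing (Polynomial Fq) :=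
    Ideal.Quotient.lift _ Λ₀ hΛ₀max with hΛdef
  haveI hpp : (q.comap f).IsPrime := Ideal.IsPrime.comap f
  set πR' : (PP ⧸ Ideal.span {gP}) →+* FractionRing (Polynomial Fq) := π'.comp f with hπR'def
  have huR : ∀ m : (q.comap f).primeCompl, IsUnit (πR' m) := by
    intro m
    have hm : π (f (m : PP ⧸ Ideal.span {gP})) ≠ 0 := m.2
    refine isUnit_iff_ne_zero.mpr fun h0 => hm (hjL ?_)
    rw [map_zero]
    exact h0
  set Λp₀ : Localization.AtPrime (q.comap f) →+* FractionRing (Polynomial Fq) :=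
    IsLocalization.lift (S := Localization.AtPrime (q.comap f)) huR with hΛp₀def
  have hΛp₀max : ∀ z ∈ IsLocalRing.maximalIdeal (Localization.AtPrime (q.comap f)),
      Λp₀ z = 0 := by
    intro z hz
    rw [← Localization.AtPrime.map_eq_maximalIdeal] at hz
    obtain ⟨xm, hxm⟩ :=
      (IsLocalization.mem_map_algebraMap_iff (q.comap f).primeCompl _).mp hz
    have h1 := congrArg Λp₀ hxm
    rw [map_mul, IsLocalization.lift_eq, IsLocalization.lift_eq] at h1
    have hx0 : πR' ((xm.1 : PP ⧸ Ideal.span {gP})) = 0 := by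
      show jL (π (f (xm.1 : PP ⧸ Ideal.span {gP}))) = 0
      rw [show π (f (xm.1 : PP ⧸ Ideal.span {gP})) = 0 from xm.1.2, map_zero]
    rw [hx0] at h1
    rcases mul_eq_zero.mp h1 with h2 | h2
    · exact h2
    · exact absurd h2 (huR xm.2).ne_zero
  set Λp : IsLocalRing.ResidueField (Localization.AtPrime (q.comap f)) →+*
      FractionRing (Polynomial Fq) :=
    Ideal.Quotient.lift _ Λp₀ hΛp₀max with hΛpdef
  set g' := Localization.localRingHom (q.comap f) q f rfl with hg'def
  have CC : Λ.comp (IsLocalRing.ResidueField.map g') = Λp := by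
    apply Ideal.Quotient.ringHom_ext
    refine IsLocalization.ringHom_ext ((q.comap f).primeCompl) (RingHom.ext fun r => ?_)
    simp only [RingHom.comp_apply]
    show Λ (IsLocalRing.ResidueField.map g'
        (IsLocalRing.residue _ ((algebraMap _ (Localization.AtPrime (q.comap f))) r)))
      = Λp (IsLocalRing.residue _ ((algebraMap _ (Localization.AtPrime (q.comap f))) r))
    have hmr : ∀ z : Localization.AtPrime (q.comap f),
        IsLocalRing.ResidueField.map g' (IsLocalRing.residue (Localization.AtPrime (q.comap f)) z)
        = IsLocalRing.residue (Localization.AtPrime q) (g' z) :=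
        by intro z; exact IsLocalRing.ResidueField.map_residue _ _
    refine Eq.trans (congrArg Λ (hmr _)) ?_
    rw [Localization.localRingHom_to_map]
    refine Eq.trans (Ideal.Quotient.lift_mk _ _ _) ?_
    refine Eq.trans (IsLocalization.lift_eq hu (f r)) ?_
    refine Eq.symm ?_
    refine Eq.trans (Ideal.Quotient.lift_mk _ _ _) ?_
    exact IsLocalization.lift_eq huR r
  set ξ := IsLocalization.mk' (Localization.AtPrime q) b₁ (⟨c, hcq⟩ : q.primeCompl) with hξdef
  obtain ⟨η, hη⟩ := (hres q).2 (IsLocalRing.residue _ ξ)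
  obtain ⟨zr, rfl⟩ := IsLocalRing.residue_surjective η
  obtain ⟨⟨r, s⟩, rfl⟩ := IsLocalization.mk'_surjective ((q.comap f).primeCompl) zr
  dsimp only at hη
  -- value equations
  have hΛξ : Λ (IsLocalRing.residue _ ξ) = Λ₀ ξ := Ideal.Quotient.lift_mk _ _ _
  have hv : Λp₀ (IsLocalization.mk' _ r s) = Λ₀ ξ := by
    have hmr : ∀ z : Localization.AtPrime (q.comap f),
        IsLocalRing.ResidueField.map g' (IsLocalRing.residue (Localization.AtPrime (q.comap f)) z)
        = IsLocalRing.residue (Localization.AtPrime q) (g' z) :=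
        by intro z; exact IsLocalRing.ResidueField.map_residue _ _
    have h1 : Λ (IsLocalRing.ResidueField.map g'
        (IsLocalRing.residue (Localization.AtPrime (q.comap f))
          (IsLocalization.mk' (Localization.AtPrime (q.comap f)) r s))) = Λ₀ ξ :=
      (congrArg Λ hη).trans hΛξ
    have h2 : Λ (IsLocalRing.ResidueField.map g'
        (IsLocalRing.residue (Localization.AtPrime (q.comap f))
          (IsLocalization.mk' (Localization.AtPrime (q.comap f)) r s)))
        = Λ₀ (g' (IsLocalization.mk' _ r s)) :=
      (congrArg Λ (hmr _)).trans (Ideal.Quotient.lift_mk _ _ _)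
    have h4 : Λ₀.comp g' = Λp₀ := by
      refine IsLocalization.ringHom_ext ((q.comap f).primeCompl) (RingHom.ext fun t => ?_)
      simp only [RingHom.comp_apply]
      rw [Localization.localRingHom_to_map, IsLocalization.lift_eq, IsLocalization.lift_eq]
      rfl
    calc Λp₀ (IsLocalization.mk' _ r s)
        = (Λ₀.comp g') (IsLocalization.mk' _ r s) := by rw [h4]
      _ = Λ₀ (g' (IsLocalization.mk' _ r s)) := rfl
      _ = Λ (IsLocalRing.ResidueField.map g'
            (IsLocalRing.residue (Localization.AtPrime (q.comap f))
          (IsLocalization.mk' (Localization.AtPrime (q.comap f)) r s))) := h2.symm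
      _ = Λ₀ ξ := h1
  have e1 : π' b₁ = π' c * Λ₀ ξ :=
    (IsLocalization.lift_mk'_spec hu b₁ (Λ₀ ξ) ⟨c, hcq⟩).mp rfl
  have e2eq : πR' r = πR' (s : PP ⧸ Ideal.span {gP}) * Λp₀ (IsLocalization.mk' _ r s) :=
    (IsLocalization.lift_mk'_spec huR r (Λp₀ (IsLocalization.mk' _ r s)) s).mp rfl
  rw [hv] at e2eq
  -- translate to polynomial identities
  have hπfr : ∀ rr : PP ⧸ Ideal.span {gP}, ∃ arr : Polynomial Fq, π (f rr) = e2' arr := by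
    intro rr
    obtain ⟨pp, rfl⟩ := Ideal.Quotient.mk_surjective rr
    refine ⟨μ pp, ?_⟩
    show ε (β (f _)) = _
    rw [hβfψ, ψ_mk, ε_φS]
  obtain ⟨ar, har⟩ := hπfr r
  obtain ⟨as, has⟩ := hπfr s
  have hs0 : π (f (s : PP ⧸ Ideal.span {gP})) ≠ 0 := s.2
  have has0 : as ≠ 0 := by
    intro h0
    rw [h0, map_zero] at has
    exact hs0 has
  -- combine equations in the fraction field
  have comb : jL (e2' ar * e2' h) = jL ((e2' as * Polynomial.X) * e2' h) := by
    have t1 : jL (e2' ar) = jL (e2' as) * Λ₀ ξ := by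
      have := e2eq
      rw [hπR'def, hπ'def] at this
      simp only [RingHom.comp_apply] at this
      rw [har, has] at this
      exact this
    have t2 : jL (Polynomial.X * e2' h) = jL (e2' h) * Λ₀ ξ := by
      have := e1
      simp only [hπ'def, RingHom.comp_apply] at this
      rw [hπb₁, hπc] at this
      exact this
    calc jL (e2' ar * e2' h) = (jL (e2' as) * Λ₀ ξ) * jL (e2' h) := by
          rw [map_mul, t1]
      _ = jL (e2' as) * (jL (e2' h) * Λ₀ ξ) := by ring
      _ = jL (e2' as) * jL (Polynomial.X * e2' h) := by rw [← t2]
      _ = jL ((e2' as * Polynomial.X) * e2' h) := by simp only [map_mul]; ring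
  have hpoly : e2' ar = e2' as * Polynomial.X := by
    have h1 : e2' ar * e2' h = (e2' as * Polynomial.X) * e2' h := hjL comb
    exact mul_right_cancel₀ he2h h1
  -- parity contradiction
  have hcoeff : (e2' ar).coeff (2 * as.natDegree + 1) = 0 := by
    rw [e2'_apply, Polynomial.coeff_expand (by norm_num)]
    have : ¬ (2 ∣ 2 * as.natDegree + 1) := by omega
    rw [if_neg this]
  rw [hpoly] at hcoeff
  have hX : (e2' as * Polynomial.X).coeff (2 * as.natDegree + 1) = as.coeff as.natDegree := by
    rw [mul_comm, Polynomial.coeff_X_mul, e2'_apply,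
      Polynomial.coeff_expand (by norm_num)]
    simp [Nat.mul_div_cancel_left]
  rw [hX] at hcoeff
  exact Polynomial.leadingCoeff_ne_zero.mpr has0 hcoeff
end
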